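/- Let F_Z be a function ring over the integers with reduction defined by division with remainder. For polynomials p, q ∈ F_Z and a set F: if 0 is the unique normal form of p − q with respect to →_F, then there exists g ∈ F_Z with p →*_F g and q →*_F g. -/

import Mathlib

variable {T : Type*} [LinearOrder T] [Nonempty T]

/-- The head term: the largest element of the support (junk value at `0`). -/
noncomputable def HT (f : T →₀ ℤ) : T :=
  if h : f.support.Nonempty then f.support.max' h else Classical.arbitrary T

/-- The head term as an element of `WithBot T` (`⊥` for the zero function). -/
def HTb (f : T →₀ ℤ) : WithBot T := f.support.max

/-- The head coefficient. -/
noncomputable def HC (f : T →₀ ℤ) : ℤ := f (HT f)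

/-- The data of a function ring over the integers with set of terms `T`. -/
structure FRMulZ (T : Type*) [LinearOrder T] where
  mul : (T →₀ ℤ) → (T →₀ ℤ) → (T →₀ ℤ)
  mul_assoc : ∀ f g h, mul (mul f g) h = mul f (mul g h)
  left_distrib : ∀ f g h, mul f (g + h) = mul f g + mul f h
  right_distrib : ∀ f g h, mul (f + g) h = mul f h + mul g h
  smul_mul : ∀ (a : ℤ) (f g : T →₀ ℤ), mul (a • f) g = a • mul f g
  mul_smul : ∀ (a : ℤ) (f g : T →₀ ℤ), mul f (a • g) = a • mul f g

/-- A right reductive restriction `≥` of the term ordering. -/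
structure RROrderZ (T : Type*) [LinearOrder T] [Nonempty T] (M : FRMulZ T) where
  geq : T → T → Prop
  refl : ∀ t, geq t t
  trans : ∀ {a b c}, geq a b → geq b c → geq a c
  antisymm : ∀ {a b}, geq a b → geq b a → a = b
  le_of_geq : ∀ {t s}, geq t s → s ≤ t
  compat : ∀ {t t₁ t₂ w : T}, geq t₂ t₁ → t < t₁ →
    HTb (M.mul (Finsupp.single t₁ (1 : ℤ)) (Finsupp.single w (1 : ℤ))) = (t₂ : WithBot T) →
    ∀ s ∈ (M.mul (Finsupp.single t (1 : ℤ)) (Finsupp.single w (1 : ℤ))).support, s < t₂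

/-- The total well-founded ordering `<_Z` on the integers:
`0 <_Z 1 <_Z 2 <_Z ⋯ <_Z -1 <_Z -2 <_Z ⋯`. -/
def zlt (a b : ℤ) : Prop :=
  (0 ≤ a ∧ b < 0) ∨ (0 ≤ a ∧ 0 < b ∧ a < b) ∨ (a < 0 ∧ b < 0 ∧ b < a)

/-- The ordering `≤_Z` on the integers. -/
def zle (a b : ℤ) : Prop := a = b ∨ zlt a b

/-- Right reduction over the integers, based on division with remainder:
`f` reduces `p` to `q` at the monomial `p t · t` if there is a term `s` with
`HT (f * s) = HT (HT f * s) = t ≥ HT f`, `p t ≥_Z HC (f * s) > 0`, and writing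
`p t = HC (f * s) · β + δ` with `0 ≤ δ < HC (f * s)`, we have
`q = p - f * (β · s)`. -/
def RRedZ (M : FRMulZ T) (O : RROrderZ T M) (f p q : T →₀ ℤ) : Prop :=
  f ≠ 0 ∧ ∃ t ∈ p.support, ∃ s : T,
    HTb (M.mul f (Finsupp.single s 1)) = (t : WithBot T) ∧
    HTb (M.mul (Finsupp.single (HT f) 1) (Finsupp.single s 1)) = (t : WithBot T) ∧
    O.geq t (HT f) ∧
    0 < HC (M.mul f (Finsupp.single s 1)) ∧
    zle (HC (M.mul f (Finsupp.single s 1))) (p t) ∧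
    ∃ β δ : ℤ, p t = HC (M.mul f (Finsupp.single s 1)) * β + δ ∧
      0 ≤ δ ∧ δ < HC (M.mul f (Finsupp.single s 1)) ∧
      q = p - M.mul f (Finsupp.single s β)

/-- Right reduction by a set of polynomials. -/
def RRedZSet (M : FRMulZ T) (O : RROrderZ T M) (F : Set (T →₀ ℤ)) (p q : T →₀ ℤ) : Prop :=
  ∃ f ∈ F, RRedZ M O f p q

set_option linter.unusedSectionVars false

private lemma zlt_bot (n : ℤ) : ¬ zlt n 0 := by unfold zlt; omega

private lemma zle_iff {γ a : ℤ} (hγ : 0 < γ) : zle γ a ↔ (a < 0 ∨ γ ≤ a) := by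
  unfold zle zlt; omega

private lemma zlt_wf : WellFounded zlt := by
  have nn : ∀ n : ℕ, ∀ a : ℤ, 0 ≤ a → a ≤ n → Acc zlt a := by
    intro n
    induction n with
    | zero =>
      intro a h1 h2
      constructor
      intro b hb
      exfalso; unfold zlt at hb; omega
    | succ n ih =>
      intro a h1 h2
      constructor
      intro b hb
      have hb' : 0 ≤ b ∧ b < a := by unfold zlt at hb; omega
      exact ih b hb'.1 (by omega)
  have nn' : ∀ a : ℤ, 0 ≤ a → Acc zlt a := fun a h => nn a.toNat a h (by omega)
  have neg : ∀ n : ℕ, ∀ a : ℤ, a < 0 → -a ≤ n + 1 → Acc zlt a := by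
    intro n
    induction n with
    | zero =>
      intro a h1 h2
      constructor
      intro b hb
      have hb' : 0 ≤ b := by unfold zlt at hb; omega
      exact nn' b hb'
    | succ n ih =>
      intro a h1 h2
      constructor
      intro b hb
      have hb' : 0 ≤ b ∨ (b < 0 ∧ a < b) := by unfold zlt at hb; omega
      rcases hb' with h | ⟨h3, h4⟩
      · exact nn' b h
      · exact ih b h3 (by omega)
  constructor
  intro a
  rcases lt_or_ge a 0 with h | h
  · exact neg (-a).toNat a h (by omega)
  · exact nn' a h

private lemma HT_eq_of_HTb {g : T →₀ ℤ} {t : T} (hg : HTb g = (t : WithBot T)) : HT g = t := by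
  have hne : g.support.Nonempty := by
    rw [Finset.nonempty_iff_ne_empty]
    intro h
    rw [HTb, h, Finset.max_empty] at hg
    simp at hg
  rw [HT, dif_pos hne]
  have h2 : (↑(g.support.max' hne) : WithBot T) = g.support.max := Finset.coe_max' hne
  rw [HTb] at hg
  exact WithBot.coe_injective (h2.trans hg)

private lemma coeff_HC {g : T →₀ ℤ} {t : T} (hg : HTb g = (t : WithBot T)) :
    g t = HC g := by rw [HC, HT_eq_of_HTb hg]

private lemma coeff_eq_zero_of_gt {g : T →₀ ℤ} {t u : T} (hg : HTb g = (t : WithBot T))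
    (h : t < u) : g u = 0 := by
  by_contra h0
  have hu : u ∈ g.support := Finsupp.mem_support_iff.2 h0
  have h1 : (u : WithBot T) ≤ HTb g := Finset.le_max hu
  rw [hg] at h1
  exact absurd (WithBot.coe_le_coe.mp h1) (not_le.2 h)


section TranslationAux

private lemma FRMulZ_mul_single_smul (M : FRMulZ T) (f : T →₀ ℤ) (s : T) (β : ℤ) :
    M.mul f (Finsupp.single s β) = β • M.mul f (Finsupp.single s 1) := by
  rw [← M.mul_smul]
  congr 1
  rw [Finsupp.smul_single, smul_eq_mul, mul_one]

private lemma step_apply (M : FRMulZ T) (f : T →₀ ℤ) (s : T) (β : ℤ) (p : T →₀ ℤ) (u : T) :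
    (p - M.mul f (Finsupp.single s β)) u = p u - β * (M.mul f (Finsupp.single s 1)) u := by
  rw [Finsupp.sub_apply, FRMulZ_mul_single_smul, Finsupp.smul_apply, smul_eq_mul]

private lemma red_lex (M : FRMulZ T) (O : RROrderZ T M) (F : Set (T →₀ ℤ)) {p q : T →₀ ℤ}
    (h : RRedZSet M O F p q) : Finsupp.Lex (· > ·) zlt q p := by
  obtain ⟨f, hF, hf0, t, ht, s, h1, h2, hgeq, hHC, hzle, β, δ, hEuc, hδ0, hδlt, rfl⟩ := h
  refine Finsupp.lex_def.2 ⟨t, ?_, ?_⟩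
  · intro d hd
    rw [step_apply, coeff_eq_zero_of_gt h1 hd, mul_zero, sub_zero]
  · rw [step_apply, coeff_HC h1]
    have h5 := (zle_iff hHC).1 hzle
    have heq : p t - β * HC (M.mul f (Finsupp.single s 1)) = δ := by rw [hEuc]; ring
    rw [heq]
    clear hEuc
    unfold zlt
    omega

private lemma red_wf (M : FRMulZ T) (O : RROrderZ T M) (F : Set (T →₀ ℤ))
    (hwf : WellFounded ((· < ·) : T → T → Prop)) :
    WellFounded (fun a b : T →₀ ℤ => RRedZSet M O F b a) := by
  haveI : IsTrichotomous T (· > ·) := ⟨fun a b => by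
    rcases lt_trichotomy a b with h | h | h
    · intro _ h2; exact absurd h h2
    · intro _ _; exact h
    · intro h1 _; exact absurd h h1⟩
  have hlex : WellFounded (Finsupp.Lex ((· > ·) : T → T → Prop) zlt) :=
    Finsupp.Lex.wellFounded' zlt_bot zlt_wf hwf
  exact Subrelation.wf (fun {a b} h => red_lex M O F h) hlex

private lemma exists_nf (M : FRMulZ T) (O : RROrderZ T M) (F : Set (T →₀ ℤ))
    (hwf : WellFounded ((· < ·) : T → T → Prop)) (p : T →₀ ℤ) :
    ∃ n, Relation.ReflTransGen (RRedZSet M O F) p n ∧ ∀ n', ¬ RRedZSet M O F n n' := by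
  induction p using (red_wf M O F hwf).induction with
  | _ p ih =>
    by_cases h : ∃ q, RRedZSet M O F p q
    · obtain ⟨q, hq⟩ := h
      obtain ⟨n, hn1, hn2⟩ := ih q hq
      exact ⟨n, Relation.ReflTransGen.head hq hn1, hn2⟩
    · push_neg at h
      exact ⟨p, Relation.ReflTransGen.refl, h⟩

private def AppRule (M : FRMulZ T) (O : RROrderZ T M) (F : Set (T →₀ ℤ)) (t : T)
    (f : T →₀ ℤ) (s : T) : Prop :=
  f ∈ F ∧ f ≠ 0 ∧
    HTb (M.mul f (Finsupp.single s 1)) = (t : WithBot T) ∧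
    HTb (M.mul (Finsupp.single (HT f) 1) (Finsupp.single s 1)) = (t : WithBot T) ∧
    O.geq t (HT f) ∧ 0 < HC (M.mul f (Finsupp.single s 1))

private lemma mk_step {M : FRMulZ T} {O : RROrderZ T M} {F : Set (T →₀ ℤ)} {t : T}
    {f : T →₀ ℤ} {s : T} (hA : AppRule M O F t f s) {p : T →₀ ℤ}
    (hne : p t ≠ 0) (hzle : zle (HC (M.mul f (Finsupp.single s 1))) (p t)) :
    RRedZSet M O F p
      (p - M.mul f (Finsupp.single s (p t / HC (M.mul f (Finsupp.single s 1))))) := by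
  obtain ⟨hF, hf0, h1, h2, hgeq, hHC⟩ := hA
  exact ⟨f, hF, hf0, t, Finsupp.mem_support_iff.2 hne, s, h1, h2, hgeq, hHC, hzle,
    p t / HC (M.mul f (Finsupp.single s 1)), p t % HC (M.mul f (Finsupp.single s 1)),
    (Int.mul_ediv_add_emod (p t) _).symm, Int.emod_nonneg _ (ne_of_gt hHC),
    Int.emod_lt_of_pos _ hHC, rfl⟩

private lemma supp_le_of_reach {M : FRMulZ T} {O : RROrderZ T M} {F : Set (T →₀ ℤ)}
    {x z : T →₀ ℤ} {w : T}
    (hx : ∀ u ∈ x.support, u ≤ w)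
    (h : Relation.ReflTransGen (RRedZSet M O F) x z) :
    ∀ u ∈ z.support, u ≤ w := by
  induction h with
  | refl => exact hx
  | tail hab hstep ih =>
    rename_i b c
    obtain ⟨f, hF, hf0, t, ht, s, h1, h2, hgeq, hHC, hzle, β, δ, hEuc, hδ0, hδlt, rfl⟩ := hstep
    intro u hu
    by_contra hcon
    push_neg at hcon
    have hbu : b u = 0 := by
      by_contra hbu
      exact absurd (ih u (Finsupp.mem_support_iff.2 hbu)) (not_le.2 hcon)
    have hgu : (M.mul f (Finsupp.single s 1)) u = 0 :=
      coeff_eq_zero_of_gt h1 (lt_of_le_of_lt (ih t ht) hcon)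
    have hzero : (b - M.mul f (Finsupp.single s β)) u = 0 := by
      rw [step_apply, hbu, hgu, mul_zero, sub_zero]
    exact Finsupp.mem_support_iff.1 hu hzero

private lemma exists_rule {M : FRMulZ T} {O : RROrderZ T M} {F : Set (T →₀ ℤ)}
    (hwf : WellFounded ((· < ·) : T → T → Prop)) {x y : T →₀ ℤ} {w : T}
    (huniq : ∀ h, Relation.ReflTransGen (RRedZSet M O F) x h →
        (∀ h', ¬ RRedZSet M O F h h') → h = 0)
    (hbound : ∀ u ∈ x.support, u ≤ w)
    (hy : Relation.ReflTransGen (RRedZSet M O F) x y)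
    (hne : y w ≠ 0) :
    ∃ f s, AppRule M O F w f s ∧ zle (HC (M.mul f (Finsupp.single s 1))) (y w) := by
  by_contra hno
  push_neg at hno
  have hstable : ∀ z, Relation.ReflTransGen (RRedZSet M O F) y z → z w = y w := by
    intro z hz
    induction hz with
    | refl => rfl
    | tail hab hstep ih =>
      rename_i b c
      obtain ⟨f, hF, hf0, t, ht, s, h1, h2, hgeq, hHC, hzle, β, δ, hEuc, hδ0, hδlt, rfl⟩ := hstep
      have htle : t ≤ w := supp_le_of_reach hbound (hy.trans hab) t ht
      rcases eq_or_lt_of_le htle with heq | hlt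
      · exfalso
        subst heq
        exact hno f s ⟨hF, hf0, h1, h2, hgeq, hHC⟩ (ih ▸ hzle)
      · rw [step_apply, coeff_eq_zero_of_gt h1 hlt, mul_zero, sub_zero]
        exact ih
  obtain ⟨n, hn1, hn2⟩ := exists_nf M O F hwf y
  have hn0 : n = 0 := huniq n (hy.trans hn1) hn2
  have hfin := hstable n hn1
  rw [hn0] at hfin
  exact hne (by simpa using hfin.symm)

private lemma exists_divisor {M : FRMulZ T} {O : RROrderZ T M} {F : Set (T →₀ ℤ)}
    (hwf : WellFounded ((· < ·) : T → T → Prop)) {x : T →₀ ℤ} {w : T}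
    (huniq : ∀ h, Relation.ReflTransGen (RRedZSet M O F) x h →
        (∀ h', ¬ RRedZSet M O F h h') → h = 0)
    (hbound : ∀ u ∈ x.support, u ≤ w)
    (hne : x w ≠ 0) :
    ∃ f s, AppRule M O F w f s ∧ zle (HC (M.mul f (Finsupp.single s 1))) (x w) ∧
      HC (M.mul f (Finsupp.single s 1)) ∣ x w := by
  obtain ⟨f₀, s₀, hA₀, hz₀⟩ := exists_rule hwf huniq hbound Relation.ReflTransGen.refl hne
  have H : ∀ n : ℕ, ∀ f s, AppRule M O F w f s →
      zle (HC (M.mul f (Finsupp.single s 1))) (x w) →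
      HC (M.mul f (Finsupp.single s 1)) ≤ n →
      ∃ f' s', AppRule M O F w f' s' ∧ zle (HC (M.mul f' (Finsupp.single s' 1))) (x w) ∧
        HC (M.mul f' (Finsupp.single s' 1)) ∣ x w := by
    intro n
    induction n with
    | zero =>
      intro f s hA hz hle
      exfalso
      have hγ := hA.2.2.2.2.2
      omega
    | succ n ih =>
      intro f s hA hz hle
      have hγ : 0 < HC (M.mul f (Finsupp.single s 1)) := hA.2.2.2.2.2
      by_cases hδ : x w % HC (M.mul f (Finsupp.single s 1)) = 0
      · exact ⟨f, s, hA, hz, Int.dvd_of_emod_eq_zero hδ⟩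
      · have hstep := mk_step hA hne hz
        have hyt : (x - M.mul f (Finsupp.single s
            (x w / HC (M.mul f (Finsupp.single s 1))))) w
            = x w % HC (M.mul f (Finsupp.single s 1)) := by
          have hg : (M.mul f (Finsupp.single s 1)) w = HC (M.mul f (Finsupp.single s 1)) :=
            coeff_HC hA.2.2.1
          have hd := Int.mul_ediv_add_emod (x w) (HC (M.mul f (Finsupp.single s 1)))
          rw [step_apply, hg]
          linarith [hd]
        obtain ⟨f', s', hA', hz'⟩ := exists_rule hwf huniq hbound
          (Relation.ReflTransGen.refl.tail hstep) (by rw [hyt]; exact hδ)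
        rw [hyt] at hz'
        have hγ' : 0 < HC (M.mul f' (Finsupp.single s' 1)) := hA'.2.2.2.2.2
        have hδpos : 0 < x w % HC (M.mul f (Finsupp.single s 1)) :=
          lt_of_le_of_ne (Int.emod_nonneg _ (ne_of_gt hγ)) (Ne.symm hδ)
        have hγ'le : HC (M.mul f' (Finsupp.single s' 1))
            ≤ x w % HC (M.mul f (Finsupp.single s 1)) := by
          rcases (zle_iff hγ').1 hz' with h | h
          · omega
          · exact h
        have hγ'γ : HC (M.mul f' (Finsupp.single s' 1)) < HC (M.mul f (Finsupp.single s 1)) :=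
          lt_of_le_of_lt hγ'le (Int.emod_lt_of_pos _ hγ)
        have hz'x : zle (HC (M.mul f' (Finsupp.single s' 1))) (x w) := by
          rcases (zle_iff hγ).1 hz with h | h
          · exact (zle_iff hγ').2 (Or.inl h)
          · exact (zle_iff hγ').2 (Or.inr (le_trans (le_of_lt hγ'γ) h))
        exact ih f' s' hA' hz'x (by omega)
  have hγ₀ : 0 < HC (M.mul f₀ (Finsupp.single s₀ 1)) := hA₀.2.2.2.2.2
  exact H (HC (M.mul f₀ (Finsupp.single s₀ 1))).toNat f₀ s₀ hA₀ hz₀ (by omega)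

private lemma main_lemma (M : FRMulZ T) (O : RROrderZ T M) (F : Set (T →₀ ℤ))
    (hwf : WellFounded ((· < ·) : T → T → Prop)) (x₀ : T →₀ ℤ)
    (huniq : ∀ h, Relation.ReflTransGen (RRedZSet M O F) x₀ h →
        (∀ h', ¬ RRedZSet M O F h h') → h = 0) :
    ∀ x, Relation.ReflTransGen (RRedZSet M O F) x₀ x → ∀ p q : T →₀ ℤ, p - q = x →
      ∃ g, Relation.ReflTransGen (RRedZSet M O F) p g ∧
        Relation.ReflTransGen (RRedZSet M O F) q g := by
  intro x
  induction x using (red_wf M O F hwf).induction with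
  | _ x ih =>
    intro hreach p q hpq
    by_cases hx0 : x = 0
    · have hpq' : p = q := sub_eq_zero.mp (by rw [hpq, hx0])
      refine ⟨q, ?_, Relation.ReflTransGen.refl⟩
      rw [hpq']
    · have hsupp : x.support.Nonempty := Finsupp.support_nonempty_iff.2 hx0
      set w := x.support.max' hsupp with hwdef
      have hbound : ∀ u ∈ x.support, u ≤ w := fun u hu => Finset.le_max' _ u hu
      have hXne : x w ≠ 0 := Finsupp.mem_support_iff.1 (x.support.max'_mem hsupp)
      have huniq' : ∀ h, Relation.ReflTransGen (RRedZSet M O F) x h →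
          (∀ h', ¬ RRedZSet M O F h h') → h = 0 :=
        fun h hh hnf => huniq h (hreach.trans hh) hnf
      obtain ⟨f, s, hA, hzle, hdvd⟩ := exists_divisor hwf huniq' hbound hXne
      have hγ : 0 < HC (M.mul f (Finsupp.single s 1)) := hA.2.2.2.2.2
      have hstep : RRedZSet M O F x
          (x - M.mul f (Finsupp.single s (x w / HC (M.mul f (Finsupp.single s 1))))) :=
        mk_step hA hXne hzle
      have hXpq : p w - q w = x w := by rw [← hpq]; simp
      obtain ⟨c, hc⟩ := hdvd
      have hβc : x w / HC (M.mul f (Finsupp.single s 1)) = c := by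
        rw [hc, Int.mul_ediv_cancel_left c (ne_of_gt hγ)]
      have hp : p w = q w + c * HC (M.mul f (Finsupp.single s 1)) := by
        rw [mul_comm]; linarith [hXpq, hc]
      have hβ12 : p w / HC (M.mul f (Finsupp.single s 1))
          - q w / HC (M.mul f (Finsupp.single s 1))
          = x w / HC (M.mul f (Finsupp.single s 1)) := by
        rw [hβc, hp, Int.add_mul_ediv_right _ _ (ne_of_gt hγ)]
        ring
      have hpstep : ∀ r : T →₀ ℤ,
          Relation.ReflTransGen (RRedZSet M O F) r
            (r - M.mul f (Finsupp.single s (r w / HC (M.mul f (Finsupp.single s 1))))) := by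
        intro r
        by_cases hβ₁ : r w / HC (M.mul f (Finsupp.single s 1)) = 0
        · have hz : M.mul f (Finsupp.single s (r w / HC (M.mul f (Finsupp.single s 1)))) = 0 := by
            rw [hβ₁, FRMulZ_mul_single_smul, zero_smul]
          rw [hz, sub_zero]
        · have h1 : r w < 0 ∨ HC (M.mul f (Finsupp.single s 1)) ≤ r w := by
            by_contra hcon
            push_neg at hcon
            exact hβ₁ (Int.ediv_eq_zero_of_lt hcon.1 hcon.2)
          have hne : r w ≠ 0 := by rcases h1 with h | h <;> omega
          exact Relation.ReflTransGen.single (mk_step hA hne ((zle_iff hγ).2 h1))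
      have hdiff : (p - M.mul f (Finsupp.single s (p w / HC (M.mul f (Finsupp.single s 1)))))
          - (q - M.mul f (Finsupp.single s (q w / HC (M.mul f (Finsupp.single s 1)))))
          = x - M.mul f (Finsupp.single s (x w / HC (M.mul f (Finsupp.single s 1)))) := by
        rw [FRMulZ_mul_single_smul M f s (p w / HC (M.mul f (Finsupp.single s 1))),
            FRMulZ_mul_single_smul M f s (q w / HC (M.mul f (Finsupp.single s 1))),
            FRMulZ_mul_single_smul M f s (x w / HC (M.mul f (Finsupp.single s 1))),
            ← hβ12, sub_smul, ← hpq]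
        abel
      obtain ⟨g, hg1, hg2⟩ := ih _ hstep (hreach.tail hstep) _ _ hdiff
      exact ⟨g, (hpstep p).trans hg1, (hpstep q).trans hg2⟩

end TranslationAux

/-- Translation Lemma over the integers: if `0` is the unique normal form of
`p - q` with respect to `F`, then `p` and `q` have a common reduct. -/
theorem translation_lemma_int
    (hwf : WellFounded ((· < ·) : T → T → Prop))
    (M : FRMulZ T) (O : RROrderZ T M) (F : Set (T →₀ ℤ)) (p q : T →₀ ℤ)
    (h0 : Relation.ReflTransGen (RRedZSet M O F) (p - q) 0)
    (huniq : ∀ h : T →₀ ℤ, Relation.ReflTransGen (RRedZSet M O F) (p - q) h →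
        (∀ h', ¬ RRedZSet M O F h h') → h = 0) :
    ∃ g : T →₀ ℤ, Relation.ReflTransGen (RRedZSet M O F) p g ∧
      Relation.ReflTransGen (RRedZSet M O F) q g := by
  exact main_lemma M O F hwf (p - q) huniq (p - q) Relation.ReflTransGen.refl p q rfl
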